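/- arXiv:2310.18871 — 2 statements merged into one kernel-verified Lean document; each statement's English description precedes it below -/
import Mathlib

section
/- Suppose F: R^d → R is L-smooth with minimum value F* and satisfies the Polyak–Łojasiewicz condition (1/2)‖∇F(x)‖² ≥ ν(F(x) - F*). Let g, g⁰ ∈ R^d with g⁰ = ∇F(x̄) and ‖g⁰ - g‖ ≤ L·e for some e ≥ 0. Then for any step size η > 0, F(x̄ - ηg) - F* ≤ F(x̄) - F* - (η/4)(1 - 2ηL)‖g‖² + (η/2)L²e² - (η/4)‖g⁰‖². -/
open InnerProductSpace intervalIntegral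
open scoped RealInnerProductSpace

lemma descent {d : ℕ} (F : EuclideanSpace ℝ (Fin d) → ℝ) (L : ℝ) (hL0 : 0 ≤ L)
    (hdiff : Differentiable ℝ F)
    (hL : ∀ x y, ‖gradient F x - gradient F y‖ ≤ L * ‖x - y‖)
    (x y : EuclideanSpace ℝ (Fin d)) :
    F y ≤ F x + ⟪gradient F x, y - x⟫_ℝ + L/2 * ‖y - x‖^2 := by
  set v := y - x with hv
  have hgradcont : Continuous (fun z => gradient F z) :=
    (LipschitzWith.of_dist_le_mul (fun a b => by
        simpa [dist_eq_norm] using (hL a b).trans (le_of_eq (by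
          rw [Real.coe_toNNReal L hL0])))).continuous
  have hφ : ∀ t : ℝ, HasDerivAt (fun t : ℝ => F (x + t • v))
      (⟪gradient F (x + t • v), v⟫_ℝ) t := by
    intro t
    have h1 : HasDerivAt (fun t : ℝ => x + t • v) v t := by
      simpa using ((hasDerivAt_id t).smul_const v).const_add x
    have h2 := (hdiff (x + t • v)).hasGradientAt.hasFDerivAt
    have := h2.comp_hasDerivAt t h1
    convert this using 1
    all_goals rfl
  have hline : Continuous (fun t : ℝ => x + t • v) :=
    continuous_const.add (continuous_id.smul continuous_const)
  have hcont : Continuous (fun t : ℝ => ⟪gradient F (x + t • v), v⟫_ℝ) :=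
    (hgradcont.comp hline).inner continuous_const
  have hcont2 : Continuous (fun t : ℝ => ⟪gradient F x, v⟫_ℝ + L * t * ‖v‖^2) :=
    continuous_const.add ((continuous_const.mul continuous_id).mul continuous_const)
  have hint : ∫ t in (0:ℝ)..1, ⟪gradient F (x + t • v), v⟫_ℝ = F y - F x := by
    rw [intervalIntegral.integral_eq_sub_of_hasDerivAt (fun t _ => hφ t)
      (hcont.intervalIntegrable 0 1)]
    simp [hv]
  have hbound : ∫ t in (0:ℝ)..1, ⟪gradient F (x + t • v), v⟫_ℝ
      ≤ ∫ t in (0:ℝ)..1, (⟪gradient F x, v⟫_ℝ + L * t * ‖v‖^2) := by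
    apply intervalIntegral.integral_mono_on (by norm_num)
      (hcont.intervalIntegrable 0 1) (hcont2.intervalIntegrable 0 1)
    intro t ht
    have h1 : ⟪gradient F (x + t • v), v⟫_ℝ - ⟪gradient F x, v⟫_ℝ
        = ⟪gradient F (x + t • v) - gradient F x, v⟫_ℝ := by
      rw [inner_sub_left]
    have h2 : ⟪gradient F (x + t • v) - gradient F x, v⟫_ℝ
        ≤ ‖gradient F (x + t • v) - gradient F x‖ * ‖v‖ :=
      real_inner_le_norm _ _
    have h3 : ‖gradient F (x + t • v) - gradient F x‖ ≤ L * (t * ‖v‖) := by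
      have := hL (x + t • v) x
      simpa [norm_smul, abs_of_nonneg ht.1] using this
    nlinarith [norm_nonneg v,
      mul_le_mul_of_nonneg_right h3 (norm_nonneg v), h2]
  have hcomp : ∫ t in (0:ℝ)..1, (⟪gradient F x, v⟫_ℝ + L * t * ‖v‖^2)
      = ⟪gradient F x, v⟫_ℝ + L/2 * ‖v‖^2 := by
    have h1 : IntervalIntegrable (fun t : ℝ => L * t * ‖v‖^2)
        MeasureTheory.volume 0 1 :=
      ((continuous_const.mul continuous_id).mul continuous_const).intervalIntegrable 0 1
    rw [intervalIntegral.integral_add intervalIntegrable_const h1]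
    have h2 : (fun t : ℝ => L * t * ‖v‖^2) = fun t : ℝ => (L * ‖v‖^2) * t := by
      ext t; ring
    rw [h2, intervalIntegral.integral_const_mul, integral_id,
      intervalIntegral.integral_const]
    norm_num; ring
  linarith [hint ▸ hbound, hcomp]

theorem stmt3 (d : ℕ) (F : EuclideanSpace ℝ (Fin d) → ℝ) (L ν Fstar : ℝ)
    (hdiff : Differentiable ℝ F)
    (hL : ∀ x y, ‖gradient F x - gradient F y‖ ≤ L * ‖x - y‖)
    (hlow : ∀ x, Fstar ≤ F x)
    (hν : 0 < ν)
    (hPL : ∀ x, ν * (F x - Fstar) ≤ (1/2) * ‖gradient F x‖^2)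
    (xbar g g0 : EuclideanSpace ℝ (Fin d)) (e η : ℝ) (he : 0 ≤ e) (hη : 0 < η)
    (hg0 : g0 = gradient F xbar) (hge : ‖g0 - g‖ ≤ L * e) :
    F (xbar - η • g) - Fstar
      ≤ F xbar - Fstar - (η/4)*(1 - 2*η*L)*‖g‖^2 + (η/2)*L^2*e^2 - (η/4)*‖g0‖^2 := by
  by_cases hL0 : 0 ≤ L
  · have hd := descent F L hL0 hdiff hL xbar (xbar - η • g)
    have hdiffnorm : ‖(xbar - η • g) - xbar‖^2 = η^2 * ‖g‖^2 := by
      rw [sub_sub_cancel_left, norm_neg, norm_smul]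
      simp [abs_of_pos hη, mul_pow]
    have hinner : ⟪gradient F xbar, (xbar - η • g) - xbar⟫_ℝ = -η * ⟪g0, g⟫_ℝ := by
      rw [sub_sub_cancel_left, hg0, inner_neg_right, inner_smul_right]; ring
    have hsq : ‖g0 - g‖^2 = ‖g0‖^2 - 2 * ⟪g0, g⟫_ℝ + ‖g‖^2 := by
      rw [norm_sub_sq_real]
    have hge2 : ‖g0 - g‖^2 ≤ (L*e)^2 := by
      have := norm_nonneg (g0 - g)
      nlinarith
    nlinarith [sq_nonneg ‖g0‖, sq_nonneg ‖g‖, norm_nonneg g0, norm_nonneg g,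
      mul_pos hη hη]
  · push_neg at hL0
    have hsub : ∀ a b : EuclideanSpace ℝ (Fin d), a = b := by
      intro a b
      by_contra hne
      have h1 : (0:ℝ) < ‖a - b‖ := by
        simpa [sub_eq_zero] using norm_sub_pos_iff.mpr hne
      have := hL a b
      nlinarith [norm_nonneg (gradient F a - gradient F b), mul_neg_of_neg_of_pos hL0 h1]
    have h1 : F (xbar - η • g) = F xbar := by rw [hsub (xbar - η • g) xbar]
    have h2 : ‖g‖ = 0 := by rw [show g = 0 from hsub g 0]; simp
    have h3 : ‖g0‖ = 0 := by rw [show g0 = 0 from hsub g0 0]; simp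
    rw [h1, h2, h3]
    nlinarith [sq_nonneg (L*e)]
end

section
/- The norm-sign compressor C(x) = (‖x‖_∞/2)·sign(x) (componentwise sign) on R^d satisfies E‖C(x)/r - x‖² ≤ (1 - ψ)‖x‖² with r = d/2 and ψ = 1/d², i.e., ‖(2/d)C(x) - x‖² ≤ (1 - 1/d²)‖x‖² for all x ∈ R^d. -/
theorem stmt15 (d : ℕ) (hd : 0 < d) (x : Fin d → ℝ) :
    ∑ i, ((‖x‖ / d) * (if 0 ≤ x i then (1:ℝ) else -1) - x i)^2
      ≤ (1 - 1/(d:ℝ)^2) * ∑ i, (x i)^2 := by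
  set M := ‖x‖ with hMdef
  have hM0 : 0 ≤ M := norm_nonneg x
  have hd1 : (1:ℝ) ≤ (d:ℝ) := by exact_mod_cast hd
  have hdpos : (0:ℝ) < (d:ℝ) := by linarith
  have h1 : ∀ i, |x i| ≤ M := fun i => by
    simpa [Real.norm_eq_abs] using norm_le_pi_norm x i
  set S := ∑ i, |x i| with hSdef
  have hS0 : 0 ≤ S := Finset.sum_nonneg fun i _ => abs_nonneg _
  have hMS : M ≤ S := by
    rw [hMdef]
    apply pi_norm_le_iff_of_nonneg hS0 |>.2
    intro i
    rw [Real.norm_eq_abs]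
    exact Finset.single_le_sum (fun j _ => abs_nonneg (x j)) (Finset.mem_univ i)
  have hSd : S ≤ d * M := by
    calc S ≤ ∑ _i : Fin d, M := Finset.sum_le_sum fun i _ => h1 i
    _ = d * M := by simp [mul_comm]
  have hQ : ∑ i, (x i)^2 ≤ M * S := by
    rw [hSdef, Finset.mul_sum]
    apply Finset.sum_le_sum
    intro i _
    rw [← sq_abs, sq]
    exact mul_le_mul_of_nonneg_right (h1 i) (abs_nonneg _)
  have hQ0 : 0 ≤ ∑ i, (x i)^2 := Finset.sum_nonneg fun i _ => sq_nonneg _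
  have hexp : ∑ i, ((M / d) * (if 0 ≤ x i then (1:ℝ) else -1) - x i)^2
      = d * (M / d)^2 - 2 * (M / d) * S + ∑ i, (x i)^2 := by
    have : ∀ i, ((M / d) * (if 0 ≤ x i then (1:ℝ) else -1) - x i)^2
        = (M / d)^2 - 2 * (M / d) * |x i| + (x i)^2 := by
      intro i
      by_cases h : 0 ≤ x i
      · rw [if_pos h, abs_of_nonneg h]; ring
      · rw [if_neg h, abs_of_neg (lt_of_not_ge h)]; ring
    rw [Finset.sum_congr rfl fun i _ => this i]
    rw [Finset.sum_add_distrib, Finset.sum_sub_distrib, ← Finset.mul_sum]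
    simp [mul_comm]
    exact Or.inl rfl
  rw [hexp]
  have hMd : (d:ℝ) * M ≤ (2*d - 1) * S := by nlinarith
  have h3 : (d:ℝ) * M * M ≤ ((2*d-1) * S) * M := mul_le_mul_of_nonneg_right hMd hM0
  have key : (d:ℝ) * M^2 - 2*d*M*S + ∑ i, (x i)^2 ≤ 0 := by nlinarith [hQ]
  have heq : ↑d * (M / ↑d) ^ 2 - 2 * (M / ↑d) * S + ∑ i, (x i)^2
      - (1 - 1/(d:ℝ)^2) * ∑ i, (x i)^2
      = ((d:ℝ) * M^2 - 2*d*M*S + ∑ i, (x i)^2) / d^2 := by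
    field_simp
    ring
  have : ((d:ℝ) * M^2 - 2*d*M*S + ∑ i, (x i)^2) / d^2 ≤ 0 :=
    div_nonpos_of_nonpos_of_nonneg key (by positivity)
  linarith [heq ▸ this]
end
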